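/- arXiv:2110.08896 — 7 statements merged into one kernel-verified Lean document; each statement's English description precedes it below -/
import Mathlib

section
/- Let n, m ≥ 1 and k ≥ m be integers, let T : ℝ^n → ℝ^n be any map, and let Q^{(k-m)}, …, Q^{(k)} ∈ ℝ^n be given. Set e_j = T Q^{(j)} − Q^{(j)} and δ_j = Q^{(j)} − Q^{(j−1)}. Let Δ ∈ ℝ^{n×m} be the matrix whose i-th column (i = 0,…,m−1) is δ_{k−i} and H ∈ ℝ^{n×m} the matrix whose i-th column is e_{k−i} − e_{k−i−1}, and assume HᵀH is invertible. Let τ = (HᵀH)^{-1} Hᵀ e_k ∈ ℝ^m, and let α ∈ ℝ^{m+1} be the unique vector with Σ_{i=0}^m α_i = 1 and τ_i = Σ_{j=0}^{m−i−1} α_j for i = 0,…,m−1. For any β ∈ ℝ define Q^{(k+1)} = (1−β)·Σ_{i=0}^m α_i Q^{(k−m+i)} + β·Σ_{i=0}^m α_i T Q^{(k−m+i)}. Then Q^{(k+1)} = Q^{(k)} − G e_k, where G = (Δ + β H)(HᵀH)^{-1} Hᵀ − β I. -/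
open Matrix

private lemma swap_sum' (m : ℕ) (F : ℕ → ℕ → ℝ) :
    ∑ t ∈ Finset.range m, ∑ j ∈ Finset.range (m - t), F t j
      = ∑ j ∈ Finset.range m, ∑ t ∈ Finset.range (m - j), F t j := by
  have h1 : ∀ b : ℕ, b ≤ m → Finset.range b = (Finset.range m).filter (· < b) := by
    intro b hb; ext x; simp only [Finset.mem_range, Finset.mem_filter]; omega
  calc ∑ t ∈ Finset.range m, ∑ j ∈ Finset.range (m - t), F t j
      = ∑ t ∈ Finset.range m, ∑ j ∈ Finset.range m, if j < m - t then F t j else 0 := by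
        refine Finset.sum_congr rfl fun t ht => ?_
        rw [h1 (m - t) (Nat.sub_le _ _), Finset.sum_filter]
    _ = ∑ j ∈ Finset.range m, ∑ t ∈ Finset.range m, if j < m - t then F t j else 0 :=
        Finset.sum_comm
    _ = ∑ j ∈ Finset.range m, ∑ t ∈ Finset.range (m - j), F t j := by
        refine Finset.sum_congr rfl fun j hj => ?_
        rw [h1 (m - j) (Nat.sub_le _ _), Finset.sum_filter]
        refine Finset.sum_congr rfl fun t ht => ?_
        simp only [Finset.mem_range] at hj ht
        exact if_congr (by omega) rfl rfl

private lemma key_sum' (m k : ℕ) (hk : m ≤ k) (α : ℕ → ℝ) (f : ℕ → ℝ) :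
    ∑ i ∈ Finset.range (m + 1), α i * f (k - m + i)
      = (∑ i ∈ Finset.range (m + 1), α i) * f k
        - ∑ t ∈ Finset.range m,
            (∑ j ∈ Finset.range (m - t), α j) * (f (k - t) - f (k - t - 1)) := by
  have hS : ∑ t ∈ Finset.range m,
        (∑ j ∈ Finset.range (m - t), α j) * (f (k - t) - f (k - t - 1))
      = ∑ j ∈ Finset.range (m + 1), α j * (f k - f (k - m + j)) := by
    have h2 : ∀ t ∈ Finset.range m,
        (∑ j ∈ Finset.range (m - t), α j) * (f (k - t) - f (k - t - 1))
        = ∑ j ∈ Finset.range (m - t), α j * (f (k - t) - f (k - t - 1)) :=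
      fun t _ => Finset.sum_mul _ _ _
    rw [Finset.sum_congr rfl h2, swap_sum']
    rw [Finset.sum_range_succ, show k - m + m = k from Nat.sub_add_cancel hk,
      sub_self, mul_zero, add_zero]
    refine Finset.sum_congr rfl fun j hj => ?_
    simp only [Finset.mem_range] at hj
    rw [← Finset.mul_sum]
    congr 1
    have htel : ∑ t ∈ Finset.range (m - j), (f (k - t) - f (k - t - 1))
        = f (k - 0) - f (k - (m - j)) := by
      have := Finset.sum_range_sub' (fun t => f (k - t)) (m - j)
      simpa [Nat.sub_sub] using this
    rw [htel]
    congr 2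
    omega
  rw [hS, Finset.sum_mul, ← Finset.sum_sub_distrib]
  exact Finset.sum_congr rfl fun j _ => by ring

/-- **Proposition 1 (quasi-Newton form of damped Anderson acceleration).**
With residuals `e j = T (Q j) - Q j`, differences `δ j = Q j - Q (j-1)`,
`Δ` the matrix with columns `δ (k-i)` and `H` the matrix with columns
`e (k-i) - e (k-i-1)` (`i = 0,…,m-1`), `τ = (HᵀH)⁻¹ Hᵀ e_k`, and `α` the mixing
coefficients determined by `τ`, the damped Anderson update equals the
quasi-Newton update `Q^{(k+1)} = Q^{(k)} - G e_k` with
`G = (Δ + β H)(HᵀH)⁻¹ Hᵀ - β I`. -/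
theorem stmt_0 (n m k : ℕ) (hn : 1 ≤ n) (hm : 1 ≤ m) (hk : m ≤ k)
    (T : (Fin n → ℝ) → (Fin n → ℝ)) (Q : ℕ → Fin n → ℝ)
    (e : ℕ → Fin n → ℝ) (he : ∀ j, e j = T (Q j) - Q j)
    (δ : ℕ → Fin n → ℝ) (hδ : ∀ j, δ j = Q j - Q (j - 1))
    (Δ H : Matrix (Fin n) (Fin m) ℝ)
    (hΔ : ∀ (r : Fin n) (i : Fin m), Δ r i = δ (k - i) r)
    (hH : ∀ (r : Fin n) (i : Fin m), H r i = (e (k - i) - e (k - i - 1)) r)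
    (hinv : IsUnit (Hᵀ * H))
    (τ : Fin m → ℝ) (hτ : τ = (Hᵀ * H)⁻¹ *ᵥ (Hᵀ *ᵥ e k))
    (α : ℕ → ℝ) (hα : ∑ i ∈ Finset.range (m + 1), α i = 1)
    (hτα : ∀ i : Fin m, τ i = ∑ j ∈ Finset.range (m - (i : ℕ)), α j)
    (β : ℝ) (Qnext : Fin n → ℝ)
    (hQnext : Qnext =
      (1 - β) • ∑ i ∈ Finset.range (m + 1), α i • Q (k - m + i)
        + β • ∑ i ∈ Finset.range (m + 1), α i • T (Q (k - m + i)))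
    (G : Matrix (Fin n) (Fin n) ℝ)
    (hG : G = (Δ + β • H) * (Hᵀ * H)⁻¹ * Hᵀ - β • (1 : Matrix (Fin n) (Fin n) ℝ)) :
    Qnext = Q k - G *ᵥ e k := by
  -- G *ᵥ e k = (Δ + β • H) *ᵥ τ - β • e k
  have hGe : G *ᵥ e k = (Δ + β • H) *ᵥ τ - β • e k := by
    rw [hG, Matrix.sub_mulVec, ← Matrix.mulVec_mulVec, ← Matrix.mulVec_mulVec, ← hτ,
      Matrix.smul_mulVec, Matrix.one_mulVec]
  funext r
  have hTQ : ∀ j, T (Q j) = e j + Q j := by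
    intro j; rw [he]; exact (sub_add_cancel _ _).symm
  -- left side pointwise
  have hL : Qnext r = (∑ i ∈ Finset.range (m + 1), α i * Q (k - m + i) r)
      + β * ∑ i ∈ Finset.range (m + 1), α i * e (k - m + i) r := by
    rw [hQnext]
    simp only [Pi.add_apply, Pi.smul_apply, Finset.sum_apply, smul_eq_mul, hTQ]
    rw [show (∑ i ∈ Finset.range (m + 1), α i * (e (k - m + i) r + Q (k - m + i) r))
        = (∑ i ∈ Finset.range (m + 1), α i * e (k - m + i) r)
          + ∑ i ∈ Finset.range (m + 1), α i * Q (k - m + i) r by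
      rw [← Finset.sum_add_distrib]
      exact Finset.sum_congr rfl fun i _ => by ring]
    ring
  rw [hL]
  -- right side pointwise
  have hRe : ((Δ + β • H) *ᵥ τ) r
      = ∑ t ∈ Finset.range m,
          ((Q (k - t) r - Q (k - t - 1) r) + β * (e (k - t) r - e (k - t - 1) r))
            * (∑ j ∈ Finset.range (m - t), α j) := by
    rw [Matrix.mulVec, dotProduct]
    rw [← Fin.sum_univ_eq_sum_range (fun t =>
      ((Q (k - t) r - Q (k - t - 1) r) + β * (e (k - t) r - e (k - t - 1) r))
        * (∑ j ∈ Finset.range (m - t), α j)) m]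
    refine Finset.sum_congr rfl fun i _ => ?_
    have h1 : Δ r i = Q (k - (i : ℕ)) r - Q (k - (i : ℕ) - 1) r := by
      rw [hΔ, hδ]; simp [Pi.sub_apply]
    have h2 : H r i = e (k - (i : ℕ)) r - e (k - (i : ℕ) - 1) r := by
      rw [hH]; simp [Pi.sub_apply]
    simp only [Matrix.add_apply, Matrix.smul_apply, smul_eq_mul, h1, h2, hτα i]
  have hQkey := key_sum' m k hk α (fun j => Q j r)
  have hekey := key_sum' m k hk α (fun j => e j r)
  simp only [hα, one_mul] at hQkey hekey
  rw [hQkey, hekey, Pi.sub_apply, hGe, Pi.sub_apply, Pi.smul_apply, smul_eq_mul, hRe]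
  rw [show ∑ t ∈ Finset.range m,
        ((Q (k - t) r - Q (k - t - 1) r) + β * (e (k - t) r - e (k - t - 1) r))
          * (∑ j ∈ Finset.range (m - t), α j)
      = (∑ t ∈ Finset.range m,
          (∑ j ∈ Finset.range (m - t), α j) * (Q (k - t) r - Q (k - t - 1) r))
        + β * ∑ t ∈ Finset.range m,
            (∑ j ∈ Finset.range (m - t), α j) * (e (k - t) r - e (k - t - 1) r) by
    rw [Finset.mul_sum, ← Finset.sum_add_distrib]
    exact Finset.sum_congr rfl fun t _ => by ring]
  ring
end

section
/- Let n, m ≥ 1, c₁, c₂ ≥ 0, and let T : ℝ^n → ℝ^n be twice continuously differentiable with ‖DT(x)‖ ≤ c₁ and ‖D²T(x)‖ ≤ c₂ for all x ∈ ℝ^n (operator norms induced by the sup norm ‖·‖_∞). Let Q : ℕ → ℝ^n satisfy, for every j ≥ m, Q^{(j+1)} = (1−β_j)·Σ_{i=0}^m α_i^{(j)} Q^{(j−m+i)} + β_j·Σ_{i=0}^m α_i^{(j)} T Q^{(j−m+i)}, where Σ_{i=0}^m α_i^{(j)} = 1 and 0 ≤ β_j ≤ 1. Fix k ≥ m+1,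 set e_j = T Q^{(j)} − Q^{(j)}, δ_j = Q^{(j)} − Q^{(j−1)}, τ_i = Σ_{l=0}^{m−i} α_l^{(k−1)} for i = 1,…,m, and let θ_k ≥ 0 satisfy ‖Σ_{i=0}^m α_i^{(k−1)} e_{k−1−m+i}‖_∞ = θ_k·‖e_{k−1}‖_∞. Then ‖e_k‖_∞ ≤ θ_k·((1−β_{k−1}) + c₁ β_{k−1})·‖e_{k−1}‖_∞ + c₂·(‖δ_k‖_∞ + ‖δ_{k−1}‖_∞)·|τ_1|·‖δ_{k−1}‖_∞ + c₂·Σ_{i=2}^m (‖δ_k‖_∞ + ‖δ_{k−i}‖_∞ + 2·Σ_{l=1}^{i−1} ‖δ_{k−l}‖_∞)·|τ_i|·‖δ_{k−i}‖_∞. -/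
open Finset MeasureTheory intervalIntegral

section Aux

variable {E : Type*} [NormedAddCommGroup E] [NormedSpace ℝ E] [CompleteSpace E]

/-- average derivative along segment from `x` to `y` -/
noncomputable def avgD (T : E → E) (x y : E) : E →L[ℝ] E :=
  ∫ t in (0:ℝ)..1, fderiv ℝ T (x + t • (y - x))

lemma contPath {T : E → E} (hT : ContDiff ℝ 2 T) (x y : E) :
    Continuous fun t : ℝ => fderiv ℝ T (x + t • (y - x)) := by
  have h1 : ContDiff ℝ 1 (fderiv ℝ T) := hT.fderiv_right (by norm_num)
  exact h1.continuous.comp (continuous_const.add (continuous_id.smul continuous_const))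

lemma avgD_apply {T : E → E} (hT : ContDiff ℝ 2 T) (x y v : E) :
    avgD T x y v = ∫ t in (0:ℝ)..1, fderiv ℝ T (x + t • (y - x)) v :=
  ContinuousLinearMap.intervalIntegral_apply ((contPath hT x y).intervalIntegrable 0 1) v

lemma avgD_sub {T : E → E} (hT : ContDiff ℝ 2 T) (x y : E) :
    avgD T x y (y - x) = T y - T x := by
  rw [avgD_apply hT]
  have hder : ∀ t ∈ Set.uIcc (0:ℝ) 1,
      HasDerivAt (fun t : ℝ => T (x + t • (y - x)))
        (fderiv ℝ T (x + t • (y - x)) (y - x)) t := by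
    intro t _
    have hp : HasDerivAt (fun t : ℝ => x + t • (y - x)) (y - x) t := by
      simpa using ((hasDerivAt_id t).smul_const (y - x)).const_add x
    exact ((hT.differentiable (by norm_num) _).hasFDerivAt).comp_hasDerivAt t hp
  have hint : IntervalIntegrable
      (fun t : ℝ => fderiv ℝ T (x + t • (y - x)) (y - x)) volume 0 1 :=
    ((contPath hT x y).clm_apply continuous_const).intervalIntegrable 0 1
  rw [intervalIntegral.integral_eq_sub_of_hasDerivAt hder hint]
  simp

lemma avgD_norm_le {T : E → E} {c : ℝ} (hc : ∀ z, ‖fderiv ℝ T z‖ ≤ c) (x y : E) :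
    ‖avgD T x y‖ ≤ c := by
  have := intervalIntegral.norm_integral_le_of_norm_le_const
    (f := fun t : ℝ => fderiv ℝ T (x + t • (y - x))) (a := 0) (b := 1) (C := c)
    (fun t _ => hc _)
  simpa [avgD] using this

lemma avgD_diff_le {T : E → E} (hT : ContDiff ℝ 2 T) {c : ℝ} (hc : 0 ≤ c)
    (hlip : ∀ u v : E, ‖fderiv ℝ T u - fderiv ℝ T v‖ ≤ c * ‖u - v‖)
    (x y x' y' : E) :
    ‖avgD T x y - avgD T x' y'‖ ≤ c * (‖x - x'‖ + ‖y - y'‖) := by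
  have hsub : avgD T x y - avgD T x' y'
      = ∫ t in (0:ℝ)..1, (fderiv ℝ T (x + t • (y - x)) - fderiv ℝ T (x' + t • (y' - x'))) := by
    rw [intervalIntegral.integral_sub ((contPath hT x y).intervalIntegrable 0 1)
      ((contPath hT x' y').intervalIntegrable 0 1)]
    rfl
  rw [hsub]
  have := intervalIntegral.norm_integral_le_of_norm_le_const
    (f := fun t : ℝ => fderiv ℝ T (x + t • (y - x)) - fderiv ℝ T (x' + t • (y' - x')))
    (a := 0) (b := 1) (C := c * (‖x - x'‖ + ‖y - y'‖)) ?_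
  · simpa using this
  · intro t ht
    rw [Set.uIoc_of_le zero_le_one] at ht
    obtain ⟨ht0, ht1⟩ := ht
    calc ‖fderiv ℝ T (x + t • (y - x)) - fderiv ℝ T (x' + t • (y' - x'))‖
        ≤ c * ‖(x + t • (y - x)) - (x' + t • (y' - x'))‖ := hlip _ _
      _ ≤ c * (‖x - x'‖ + ‖y - y'‖) := by
          apply mul_le_mul_of_nonneg_left _ hc
          have harg : (x + t • (y - x)) - (x' + t • (y' - x'))
              = (1 - t) • (x - x') + t • (y - y') := by module
          rw [harg]
          calc ‖(1 - t) • (x - x') + t • (y - y')‖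
              ≤ ‖(1 - t) • (x - x')‖ + ‖t • (y - y')‖ := norm_add_le _ _
            _ = |1 - t| * ‖x - x'‖ + |t| * ‖y - y'‖ := by rw [norm_smul, norm_smul]; rfl
            _ ≤ 1 * ‖x - x'‖ + 1 * ‖y - y'‖ := by
                have h1 : |1 - t| ≤ 1 := abs_le.mpr ⟨by linarith, by linarith⟩
                have h2 : |t| ≤ 1 := abs_le.mpr ⟨by linarith, by linarith⟩
                gcongr <;> exact norm_nonneg _
            _ = ‖x - x'‖ + ‖y - y'‖ := by ring

lemma norm_iter1 {F : Type*} [NormedAddCommGroup F] [NormedSpace ℝ F]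
    (f : E → F) (x : E) : ‖iteratedFDeriv ℝ 1 f x‖ = ‖fderiv ℝ f x‖ := by
  have h : iteratedFDeriv ℝ 1 f x
      = (continuousMultilinearCurryFin1 ℝ E F).symm (fderiv ℝ f x) := by
    ext m
    simp [iteratedFDeriv_one_apply]
  rw [h, LinearIsometryEquiv.norm_map]

lemma fderiv_lip {T : E → E} (hT : ContDiff ℝ 2 T) {c : ℝ}
    (h2 : ∀ x, ‖iteratedFDeriv ℝ 2 T x‖ ≤ c) (u v : E) :
    ‖fderiv ℝ T u - fderiv ℝ T v‖ ≤ c * ‖u - v‖ := by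
  have h1 : ContDiff ℝ 1 (fderiv ℝ T) := hT.fderiv_right (by norm_num)
  have := Convex.norm_image_sub_le_of_norm_fderiv_le
    (f := fderiv ℝ T) (C := c) (s := Set.univ)
    (fun x _ => (h1.differentiable one_ne_zero) x) ?_ convex_univ (Set.mem_univ v) (Set.mem_univ u)
  · exact this
  · intro x _
    have e1 : ‖fderiv ℝ (fderiv ℝ T) x‖ = ‖iteratedFDeriv ℝ 1 (fderiv ℝ T) x‖ :=
      (norm_iter1 (fderiv ℝ T) x).symm
    rw [e1, norm_iteratedFDeriv_fderiv]
    exact h2 x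

end Aux

section Sums

variable {V : Type*} [AddCommGroup V] [Module ℝ V]

lemma abel_sum (a : ℕ → ℝ) (f : ℕ → V) (m : ℕ) :
    ∑ i ∈ range (m+1), a i • f i
      = (∑ i ∈ range (m+1), a i) • f m
        - ∑ l ∈ range m, (∑ j ∈ range (l+1), a j) • (f (l+1) - f l) := by
  induction m with
  | zero => simp
  | succ m ih =>
      rw [sum_range_succ (f := fun i => a i • f i), ih,
        sum_range_succ (f := fun l => (∑ j ∈ range (l+1), a j) • (f (l+1) - f l)) m,
        Finset.sum_range_succ a (m+1)]
      module

lemma abel_shift (m k : ℕ) (hm : 1 ≤ m) (hk : m + 1 ≤ k)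
    (a : ℕ → ℝ) (ha : ∑ i ∈ range (m+1), a i = 1)
    (τ : ℕ → ℝ) (hτ : ∀ i, 1 ≤ i → i ≤ m → τ i = ∑ l ∈ range (m - i + 1), a l)
    (F : ℕ → V) :
    ∑ i ∈ range (m+1), a i • F (k - 1 - m + i)
      = F (k-1) - ∑ i ∈ Icc 1 m, τ i • (F (k - i) - F (k - i - 1)) := by
  rw [abel_sum a (fun i => F (k - 1 - m + i)) m, ha, one_smul]
  have hidx : k - 1 - m + m = k - 1 := by omega
  rw [hidx]
  congr 1
  refine Finset.sum_nbij' (fun l => m - l) (fun i => m - i) ?_ ?_ ?_ ?_ ?_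
  · intro l hl; simp only [mem_range] at hl; simp only [mem_Icc]; omega
  · intro i hi; simp only [mem_Icc] at hi; simp only [mem_range]; omega
  · intro l hl; simp only [mem_range] at hl; show m - (m - l) = l; omega
  · intro i hi; simp only [mem_Icc] at hi; show m - (m - i) = i; omega
  · intro l hl
    simp only [mem_range] at hl
    rw [hτ (m - l) (by omega) (by omega)]
    have e0 : m - (m - l) + 1 = l + 1 := by omega
    have e1 : k - 1 - m + (l + 1) = k - (m - l) := by omega
    have e2 : k - 1 - m + l = k - (m - l) - 1 := by omega
    rw [e0, e1, e2]

lemma telescope (Q : ℕ → V) (δ : ℕ → V) (hδ : ∀ j, δ j = Q j - Q (j-1)) :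
    ∀ i k, i ≤ k → Q k - Q (k - i) = ∑ l ∈ range i, δ (k - l) := by
  intro i
  induction i with
  | zero => intro k _; simp
  | succ i ih =>
      intro k hk
      rw [sum_range_succ, ← ih k (by omega), hδ (k - i)]
      have e1 : k - (i+1) = k - i - 1 := by omega
      rw [e1]
      abel

end Sums

/-- **Theorem 1 (one-step residual bound for damped Anderson acceleration).**
`ℝ^n` carries the sup norm (the `Pi` norm on `Fin n → ℝ`); operator norms of
derivatives are the induced norms. For `T` twice continuously differentiable
with `‖DT‖ ≤ c₁` and `‖D²T‖ ≤ c₂`, Anderson iterates `Q` with memory `m`,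
mixing coefficients `α` summing to one and damping `β_j ∈ [0,1]`, and stage
gain `θ` defined by `‖∑ᵢ α_i^{(k-1)} e_{k-1-m+i}‖_∞ = θ ‖e_{k-1}‖_∞`, the
residual `e_k = T Q^{(k)} - Q^{(k)}` satisfies the stated bound. -/
theorem stmt_1 (n m : ℕ) (hn : 1 ≤ n) (hm : 1 ≤ m) (c₁ c₂ : ℝ)
    (hc₁ : 0 ≤ c₁) (hc₂ : 0 ≤ c₂)
    (T : (Fin n → ℝ) → (Fin n → ℝ)) (hT : ContDiff ℝ 2 T)
    (hDT : ∀ x : Fin n → ℝ, ‖fderiv ℝ T x‖ ≤ c₁)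
    (hD2T : ∀ x : Fin n → ℝ, ‖iteratedFDeriv ℝ 2 T x‖ ≤ c₂)
    (Q : ℕ → Fin n → ℝ) (α : ℕ → ℕ → ℝ) (β : ℕ → ℝ)
    (hiter : ∀ j, m ≤ j →
      Q (j + 1) = (1 - β j) • ∑ i ∈ Finset.range (m + 1), α j i • Q (j - m + i)
        + β j • ∑ i ∈ Finset.range (m + 1), α j i • T (Q (j - m + i)))
    (hα : ∀ j, ∑ i ∈ Finset.range (m + 1), α j i = 1)
    (hβ : ∀ j, 0 ≤ β j ∧ β j ≤ 1)
    (k : ℕ) (hk : m + 1 ≤ k)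
    (e : ℕ → Fin n → ℝ) (he : ∀ j, e j = T (Q j) - Q j)
    (δ : ℕ → Fin n → ℝ) (hδ : ∀ j, δ j = Q j - Q (j - 1))
    (τ : ℕ → ℝ)
    (hτ : ∀ i, 1 ≤ i → i ≤ m → τ i = ∑ l ∈ Finset.range (m - i + 1), α (k - 1) l)
    (θ : ℝ) (hθ0 : 0 ≤ θ)
    (hθ : ‖∑ i ∈ Finset.range (m + 1), α (k - 1) i • e (k - 1 - m + i)‖ =
      θ * ‖e (k - 1)‖) :
    ‖e k‖ ≤ θ * ((1 - β (k - 1)) + c₁ * β (k - 1)) * ‖e (k - 1)‖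
      + c₂ * (‖δ k‖ + ‖δ (k - 1)‖) * |τ 1| * ‖δ (k - 1)‖
      + c₂ * ∑ i ∈ Finset.Icc 2 m,
          (‖δ k‖ + ‖δ (k - i)‖ + 2 * ∑ l ∈ Finset.Icc 1 (i - 1), ‖δ (k - l)‖)
            * |τ i| * ‖δ (k - i)‖ := by
  obtain ⟨hb0, hb1⟩ := hβ (k - 1)
  set X := ∑ i ∈ Finset.range (m + 1), α (k - 1) i • Q (k - 1 - m + i) with hXdef
  set W := ∑ i ∈ Finset.range (m + 1), α (k - 1) i • T (Q (k - 1 - m + i)) with hWdef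
  set s := ∑ i ∈ Finset.range (m + 1), α (k - 1) i • e (k - 1 - m + i) with hsdef
  have hQk : Q k = (1 - β (k - 1)) • X + β (k - 1) • W := by
    have h := hiter (k - 1) (by omega)
    rwa [show k - 1 + 1 = k by omega] at h
  have hsWX : s = W - X := by
    rw [hsdef, hWdef, hXdef, ← Finset.sum_sub_distrib]
    exact Finset.sum_congr rfl fun i _ => by rw [he, smul_sub]
  have hX' : X = Q (k - 1) - ∑ i ∈ Finset.Icc 1 m, τ i • δ (k - i) := by
    rw [hXdef, abel_shift m k hm hk (α (k - 1)) (hα (k - 1)) τ hτ Q]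
    congr 1
    exact Finset.sum_congr rfl fun i _ => by rw [hδ (k - i)]
  have hW' : W = T (Q (k - 1)) - ∑ i ∈ Finset.Icc 1 m,
      τ i • ((avgD T (Q (k - i - 1)) (Q (k - i))) (δ (k - i))) := by
    rw [hWdef, abel_shift m k hm hk (α (k - 1)) (hα (k - 1)) τ hτ (fun j => T (Q j))]
    congr 1
    refine Finset.sum_congr rfl fun i _ => ?_
    rw [← avgD_sub hT (Q (k - i - 1)) (Q (k - i)), ← hδ (k - i)]
  have hTQk : T (Q k) = T (Q (k - 1)) + (avgD T (Q (k - 1)) (Q k)) (δ k) := by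
    have h := avgD_sub hT (Q (k - 1)) (Q k)
    rw [← hδ k] at h
    rw [h]; abel
  have hsum_delta : δ k + ∑ i ∈ Finset.Icc 1 m, τ i • δ (k - i) = β (k - 1) • s := by
    have h1 : ∑ i ∈ Finset.Icc 1 m, τ i • δ (k - i) = Q (k - 1) - X := by
      rw [hX']; abel
    rw [h1, hδ k, hQk, hsWX]; module
  have hMsum : (avgD T (Q (k - 1)) (Q k)) (δ k)
      + ∑ i ∈ Finset.Icc 1 m, τ i • (avgD T (Q (k - 1)) (Q k)) (δ (k - i))
      = β (k - 1) • (avgD T (Q (k - 1)) (Q k)) s := by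
    have h2 : (avgD T (Q (k - 1)) (Q k)) (δ k)
        + ∑ i ∈ Finset.Icc 1 m, τ i • (avgD T (Q (k - 1)) (Q k)) (δ (k - i))
        = (avgD T (Q (k - 1)) (Q k)) (δ k + ∑ i ∈ Finset.Icc 1 m, τ i • δ (k - i)) := by
      rw [map_add, map_sum]
      congr 1
      exact Finset.sum_congr rfl fun i _ => (_root_.map_smul _ _ _).symm
    rw [h2, hsum_delta, _root_.map_smul]
  have key : e k = (1 - β (k - 1)) • s + β (k - 1) • ((avgD T (Q (k - 1)) (Q k)) s)
      + ∑ i ∈ Finset.Icc 1 m, τ i •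
        ((avgD T (Q (k - i - 1)) (Q (k - i)) - avgD T (Q (k - 1)) (Q k)) (δ (k - i))) := by
    have h8 : ∑ i ∈ Finset.Icc 1 m, τ i • ((avgD T (Q (k - i - 1)) (Q (k - i))) (δ (k - i)))
        = ∑ i ∈ Finset.Icc 1 m, τ i • ((avgD T (Q (k - 1)) (Q k)) (δ (k - i)))
          + ∑ i ∈ Finset.Icc 1 m, τ i •
            ((avgD T (Q (k - i - 1)) (Q (k - i)) - avgD T (Q (k - 1)) (Q k)) (δ (k - i))) := by
      rw [← Finset.sum_add_distrib]
      refine Finset.sum_congr rfl fun i _ => ?_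
      rw [ContinuousLinearMap.sub_apply]
      module
    have hek : e k = (T (Q (k - 1)) + (avgD T (Q (k - 1)) (Q k)) (δ k))
        - ((1 - β (k - 1)) • X + β (k - 1) • W) := by
      rw [he k, ← hTQk, ← hQk]
    rw [hek, ← hMsum, hsWX, hW', h8]
    module
  -- estimates
  have hlip := fderiv_lip hT hD2T
  have hMs : ‖(avgD T (Q (k - 1)) (Q k)) s‖ ≤ c₁ * ‖s‖ :=
    le_trans (ContinuousLinearMap.le_opNorm _ s)
      (mul_le_mul_of_nonneg_right (avgD_norm_le hDT _ _) (norm_nonneg s))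
  have hRbound : ∀ i ∈ Finset.Icc 1 m,
      ‖(avgD T (Q (k - i - 1)) (Q (k - i)) - avgD T (Q (k - 1)) (Q k)) (δ (k - i))‖
        ≤ c₂ * (‖δ k‖ + ‖δ (k - i)‖ + 2 * ∑ l ∈ Finset.Icc 1 (i - 1), ‖δ (k - l)‖)
          * ‖δ (k - i)‖ := by
    intro i hi
    obtain ⟨hi1, him⟩ := Finset.mem_Icc.mp hi
    have hd : ‖avgD T (Q (k - i - 1)) (Q (k - i)) - avgD T (Q (k - 1)) (Q k)‖
        ≤ c₂ * (‖Q (k - i - 1) - Q (k - 1)‖ + ‖Q (k - i) - Q k‖) :=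
      avgD_diff_le hT hc₂ hlip _ _ _ _
    have hA : ‖Q (k - i - 1) - Q (k - 1)‖ ≤ ∑ l ∈ Finset.Icc 1 i, ‖δ (k - l)‖ := by
      have htel := telescope Q δ hδ i (k - 1) (by omega)
      have hidx : k - i - 1 = k - 1 - i := by omega
      rw [hidx]
      calc ‖Q (k - 1 - i) - Q (k - 1)‖ = ‖Q (k - 1) - Q (k - 1 - i)‖ := norm_sub_rev _ _
        _ = ‖∑ l ∈ Finset.range i, δ (k - 1 - l)‖ := by rw [htel]
        _ ≤ ∑ l ∈ Finset.range i, ‖δ (k - 1 - l)‖ := norm_sum_le _ _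
        _ = ∑ l ∈ Finset.Icc 1 i, ‖δ (k - l)‖ := by
            rw [← Finset.Ico_add_one_right_eq_Icc, Finset.sum_Ico_eq_sum_range]
            refine Finset.sum_congr (by congr 1) fun l hl => ?_
            have : k - 1 - l = k - (1 + l) := by omega
            rw [this]
    have hB : ‖Q (k - i) - Q k‖ ≤ ‖δ k‖ + ∑ l ∈ Finset.Icc 1 (i - 1), ‖δ (k - l)‖ := by
      have htel := telescope Q δ hδ i k (by omega)
      calc ‖Q (k - i) - Q k‖ = ‖Q k - Q (k - i)‖ := norm_sub_rev _ _
        _ = ‖∑ l ∈ Finset.range i, δ (k - l)‖ := by rw [htel]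
        _ ≤ ∑ l ∈ Finset.range i, ‖δ (k - l)‖ := norm_sum_le _ _
        _ = ‖δ k‖ + ∑ l ∈ Finset.Icc 1 (i - 1), ‖δ (k - l)‖ := by
            rw [show i = (i - 1) + 1 by omega, Finset.sum_range_succ']
            have h9 : ∑ l ∈ Finset.range (i - 1), ‖δ (k - (l + 1))‖
                = ∑ l ∈ Finset.Icc 1 (i - 1), ‖δ (k - l)‖ := by
              rw [← Finset.Ico_add_one_right_eq_Icc, Finset.sum_Ico_eq_sum_range]
              refine Finset.sum_congr (by congr 1) fun l hl => ?_
              have : k - (l + 1) = k - (1 + l) := by omega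
              rw [this]
            rw [h9]
            simp [add_comm]
    have hsplitIcc : ∑ l ∈ Finset.Icc 1 i, ‖δ (k - l)‖
        = ∑ l ∈ Finset.Icc 1 (i - 1), ‖δ (k - l)‖ + ‖δ (k - i)‖ := by
      have h10 := Finset.sum_Icc_succ_top (a := 1) (b := i - 1)
        (f := fun l => ‖δ (k - l)‖) (by omega)
      rw [show (i - 1) + 1 = i by omega] at h10
      exact h10
    calc ‖(avgD T (Q (k - i - 1)) (Q (k - i)) - avgD T (Q (k - 1)) (Q k)) (δ (k - i))‖
        ≤ ‖avgD T (Q (k - i - 1)) (Q (k - i)) - avgD T (Q (k - 1)) (Q k)‖ * ‖δ (k - i)‖ :=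
          ContinuousLinearMap.le_opNorm _ _
      _ ≤ (c₂ * (‖Q (k - i - 1) - Q (k - 1)‖ + ‖Q (k - i) - Q k‖)) * ‖δ (k - i)‖ :=
          mul_le_mul_of_nonneg_right hd (norm_nonneg _)
      _ ≤ c₂ * (‖δ k‖ + ‖δ (k - i)‖ + 2 * ∑ l ∈ Finset.Icc 1 (i - 1), ‖δ (k - l)‖)
            * ‖δ (k - i)‖ := by
          refine mul_le_mul_of_nonneg_right (mul_le_mul_of_nonneg_left ?_ hc₂) (norm_nonneg _)
          linarith [hA, hB, hsplitIcc]
  have main : ‖e k‖ ≤ (1 - β (k - 1)) * ‖s‖ + β (k - 1) * (c₁ * ‖s‖)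
      + ∑ i ∈ Finset.Icc 1 m, |τ i| *
          (c₂ * (‖δ k‖ + ‖δ (k - i)‖ + 2 * ∑ l ∈ Finset.Icc 1 (i - 1), ‖δ (k - l)‖)
            * ‖δ (k - i)‖) := by
    rw [key]
    refine le_trans (norm_add₃_le) (add_le_add (add_le_add ?_ ?_) ?_)
    · rw [norm_smul, Real.norm_eq_abs, abs_of_nonneg (by linarith : (0:ℝ) ≤ 1 - β (k - 1))]
    · rw [norm_smul, Real.norm_eq_abs, abs_of_nonneg hb0]
      exact mul_le_mul_of_nonneg_left hMs hb0
    · refine le_trans (norm_sum_le _ _) (Finset.sum_le_sum fun i hi => ?_)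
      rw [norm_smul, Real.norm_eq_abs]
      exact mul_le_mul_of_nonneg_left (hRbound i hi) (abs_nonneg _)
  rw [hθ] at main
  have hsplit : ∑ i ∈ Finset.Icc 1 m, |τ i| *
      (c₂ * (‖δ k‖ + ‖δ (k - i)‖ + 2 * ∑ l ∈ Finset.Icc 1 (i - 1), ‖δ (k - l)‖)
        * ‖δ (k - i)‖)
      = c₂ * (‖δ k‖ + ‖δ (k - 1)‖) * |τ 1| * ‖δ (k - 1)‖
        + c₂ * ∑ i ∈ Finset.Icc 2 m,
            (‖δ k‖ + ‖δ (k - i)‖ + 2 * ∑ l ∈ Finset.Icc 1 (i - 1), ‖δ (k - l)‖)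
              * |τ i| * ‖δ (k - i)‖ := by
    have hins : Finset.Icc 1 m = insert 1 (Finset.Icc 2 m) := by
      ext x; simp only [Finset.mem_Icc, Finset.mem_insert]; omega
    rw [hins, Finset.sum_insert (by simp)]
    congr 1
    · have h0 : Finset.Icc 1 0 = (∅ : Finset ℕ) := by simp
      rw [h0, Finset.sum_empty]
      ring
    · rw [Finset.mul_sum]
      exact Finset.sum_congr rfl fun i hi => by ring
  rw [hsplit] at main
  calc ‖e k‖ ≤ (1 - β (k - 1)) * (θ * ‖e (k - 1)‖) + β (k - 1) * (c₁ * (θ * ‖e (k - 1)‖))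
      + (c₂ * (‖δ k‖ + ‖δ (k - 1)‖) * |τ 1| * ‖δ (k - 1)‖
        + c₂ * ∑ i ∈ Finset.Icc 2 m,
            (‖δ k‖ + ‖δ (k - i)‖ + 2 * ∑ l ∈ Finset.Icc 1 (i - 1), ‖δ (k - l)‖)
              * |τ i| * ‖δ (k - i)‖) := main
    _ = θ * ((1 - β (k - 1)) + c₁ * β (k - 1)) * ‖e (k - 1)‖
      + c₂ * (‖δ k‖ + ‖δ (k - 1)‖) * |τ 1| * ‖δ (k - 1)‖
      + c₂ * ∑ i ∈ Finset.Icc 2 m,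
          (‖δ k‖ + ‖δ (k - i)‖ + 2 * ∑ l ∈ Finset.Icc 1 (i - 1), ‖δ (k - l)‖)
            * |τ i| * ‖δ (k - i)‖ := by ring
end

section
/- Let n, m ≥ 1, let Δ, H ∈ ℝ^{n×m} with ‖Δ‖_F² + ‖H‖_F² > 0, let η > 0 and 0 ≤ β ≤ 1. Set λ = η(‖Δ‖_F² + ‖H‖_F²) and G̃ = −β I + (Δ + β H)(HᵀH + λ I)^{-1} Hᵀ ∈ ℝ^{n×n}. Then the spectral norm of G̃ satisfies ‖G̃‖₂ ≤ β + 2/η. -/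
open Matrix

/-- The spectral (ℓ₂ operator) norm of a real matrix. -/
noncomputable def specNorm {n m : ℕ} (M : Matrix (Fin n) (Fin m) ℝ) : ℝ :=
  ‖LinearMap.toContinuousLinearMap (Matrix.toEuclideanLin M)‖

/-- The Frobenius norm of a real matrix. -/
noncomputable def frobNorm {n m : ℕ} (M : Matrix (Fin n) (Fin m) ℝ) : ℝ :=
  Real.sqrt (∑ i, ∑ j, M i j ^ 2)

open scoped Matrix.Norms.L2Operator

lemma StableAA.specNorm_eq {n m : ℕ} (M : Matrix (Fin n) (Fin m) ℝ) : specNorm M = ‖M‖ := rfl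

lemma StableAA.euclid_norm_eq {k : ℕ} (x : EuclideanSpace ℝ (Fin k)) :
    ‖x‖ = Real.sqrt (∑ i, x i ^ 2) := by
  rw [EuclideanSpace.norm_eq]
  simp [sq_abs]

lemma StableAA.opNorm_le_bound' {a b : ℕ} (M : Matrix (Fin a) (Fin b) ℝ) {c : ℝ} (hc : 0 ≤ c)
    (h : ∀ x : Fin b → ℝ, Real.sqrt (∑ i, (M *ᵥ x) i ^ 2) ≤ c * Real.sqrt (∑ j, x j ^ 2)) :
    ‖M‖ ≤ c := by
  rw [Matrix.l2_opNorm_def]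
  refine ContinuousLinearMap.opNorm_le_bound _ hc fun x => ?_
  have hx := h (WithLp.equiv 2 _ x)
  calc ‖(LinearEquiv.trans (Matrix.toEuclideanLin) LinearMap.toContinuousLinearMap) M x‖
      = Real.sqrt (∑ i, (M *ᵥ (WithLp.equiv 2 _ x)) i ^ 2) := by
        rw [StableAA.euclid_norm_eq]; rfl
    _ ≤ c * Real.sqrt (∑ j, (WithLp.equiv 2 _ x) j ^ 2) := hx
    _ = c * ‖x‖ := by rw [StableAA.euclid_norm_eq]; rfl

lemma StableAA.frobNorm_transpose {a b : ℕ} (M : Matrix (Fin a) (Fin b) ℝ) :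
    frobNorm Mᵀ = frobNorm M := by
  unfold frobNorm
  rw [Finset.sum_comm]
  simp [Matrix.transpose_apply]

lemma StableAA.opNorm_le_frobNorm {a b : ℕ} (M : Matrix (Fin a) (Fin b) ℝ) :
    ‖M‖ ≤ frobNorm M := by
  refine StableAA.opNorm_le_bound' M (Real.sqrt_nonneg _) fun x => ?_
  unfold frobNorm
  rw [← Real.sqrt_mul (by positivity)]
  apply Real.sqrt_le_sqrt
  rw [Finset.sum_mul]
  refine Finset.sum_le_sum fun i _ => ?_
  simpa [Matrix.mulVec, dotProduct] using
    Finset.sum_mul_sq_le_sq_mul_sq Finset.univ (fun j => M i j) x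

lemma StableAA.cauchy_sum {k : ℕ} (w v : Fin k → ℝ) :
    (∑ i, w i * v i) ≤ Real.sqrt (∑ i, w i ^ 2) * Real.sqrt (∑ i, v i ^ 2) := by
  calc (∑ i, w i * v i) ≤ |∑ i, w i * v i| := le_abs_self _
    _ = Real.sqrt ((∑ i, w i * v i) ^ 2) := (Real.sqrt_sq_eq_abs _).symm
    _ ≤ Real.sqrt ((∑ i, w i ^ 2) * ∑ i, v i ^ 2) :=
        Real.sqrt_le_sqrt (Finset.sum_mul_sq_le_sq_mul_sq Finset.univ w v)
    _ = _ := Real.sqrt_mul (by positivity) _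

lemma StableAA.inv_opNorm_le {a b : ℕ} (H : Matrix (Fin a) (Fin b) ℝ) {lam : ℝ} (hl : 0 < lam) :
    ‖(Hᵀ * H + lam • (1 : Matrix (Fin b) (Fin b) ℝ))⁻¹‖ ≤ lam⁻¹ := by
  have hTT : Hᴴ = Hᵀ := by ext i j; simp [Matrix.conjTranspose_apply]
  have hsemi : (Hᵀ * H).PosSemidef := by
    simpa [hTT] using Matrix.posSemidef_conjTranspose_mul_self H
  have hsm : (lam • (1 : Matrix (Fin b) (Fin b) ℝ)).PosDef := by
    refine Matrix.PosDef.of_dotProduct_mulVec_pos ?_ fun x hx => ?_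
    · unfold Matrix.IsHermitian
      ext i j
      by_cases h : i = j <;> simp [Matrix.conjTranspose_apply, Matrix.one_apply, h, eq_comm]
    · have : (lam • (1 : Matrix (Fin b) (Fin b) ℝ)) *ᵥ x = lam • x := by
        rw [Matrix.smul_mulVec, Matrix.one_mulVec]
      rw [this]
      have hxx : 0 < dotProduct (star x) x :=
        dotProduct_star_self_pos_iff.mpr hx
      simpa [dotProduct_smul] using mul_pos hl hxx
  have hPD : (Hᵀ * H + lam • (1 : Matrix (Fin b) (Fin b) ℝ)).PosDef :=
    Matrix.PosDef.posSemidef_add hsemi hsm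
  set Mm := Hᵀ * H + lam • (1 : Matrix (Fin b) (Fin b) ℝ) with hMm
  have hInv : Mm * Mm⁻¹ = 1 := Matrix.mul_nonsing_inv _ hPD.det_pos.ne'.isUnit
  refine StableAA.opNorm_le_bound' _ (by positivity) fun v => ?_
  set w : Fin b → ℝ := Mm⁻¹ *ᵥ v with hw
  have hMw : Mm *ᵥ w = v := by
    rw [hw, Matrix.mulVec_mulVec, hInv, Matrix.one_mulVec]
  have hq : 0 ≤ dotProduct w ((Hᵀ * H) *ᵥ w) := by
    simpa using hsemi.dotProduct_mulVec_nonneg w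
  have hdot : dotProduct w v
      = dotProduct w ((Hᵀ * H) *ᵥ w) + lam * dotProduct w w := by
    rw [← hMw, hMm, Matrix.add_mulVec, dotProduct_add,
      Matrix.smul_mulVec, Matrix.one_mulVec, dotProduct_smul]
    simp [smul_eq_mul]
  have hkey : lam * (∑ i, w i ^ 2) ≤ ∑ i, w i * v i := by
    have h1 : dotProduct w w = ∑ i, w i ^ 2 := by
      simp [dotProduct, pow_two]
    have h2 : dotProduct w v = ∑ i, w i * v i := rfl
    nlinarith [hq, hdot]
  have hcs := StableAA.cauchy_sum w v
  set A := Real.sqrt (∑ i, w i ^ 2) with hA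
  set B := Real.sqrt (∑ i, v i ^ 2) with hB
  have hA2 : A ^ 2 = ∑ i, w i ^ 2 := Real.sq_sqrt (by positivity)
  have hA0 : 0 ≤ A := Real.sqrt_nonneg _
  have hB0 : 0 ≤ B := Real.sqrt_nonneg _
  have hmain : lam * A ^ 2 ≤ A * B := by rw [hA2]; exact hkey.trans hcs
  rcases eq_or_lt_of_le hA0 with h0 | h0
  · rw [← h0]; positivity
  · have hAB : lam * A ≤ B := by nlinarith
    calc A = lam⁻¹ * (lam * A) := by field_simp
      _ ≤ lam⁻¹ * B := mul_le_mul_of_nonneg_left hAB (inv_nonneg.mpr hl.le)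

lemma StableAA.opNorm_one_le {k : ℕ} : ‖(1 : Matrix (Fin k) (Fin k) ℝ)‖ ≤ 1 := by
  refine StableAA.opNorm_le_bound' _ zero_le_one fun x => ?_
  rw [Matrix.one_mulVec, one_mul]

/-- **Spectral-norm bound for the stable-regularized update matrix (Theorem 3).**
With `λ = η(‖Δ‖_F² + ‖H‖_F²)` and
`G̃ = -β I + (Δ + β H)(HᵀH + λ I)⁻¹ Hᵀ`, one has `‖G̃‖₂ ≤ β + 2/η`. -/
theorem stmt_3 (n m : ℕ) (hn : 1 ≤ n) (hm : 1 ≤ m)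
    (Δ H : Matrix (Fin n) (Fin m) ℝ)
    (hpos : 0 < frobNorm Δ ^ 2 + frobNorm H ^ 2)
    (η : ℝ) (hη : 0 < η) (β : ℝ) (hβ0 : 0 ≤ β) (hβ1 : β ≤ 1)
    (lam : ℝ) (hlam : lam = η * (frobNorm Δ ^ 2 + frobNorm H ^ 2))
    (Gt : Matrix (Fin n) (Fin n) ℝ)
    (hGt : Gt = -β • (1 : Matrix (Fin n) (Fin n) ℝ)
        + (Δ + β • H) * (Hᵀ * H + lam • (1 : Matrix (Fin m) (Fin m) ℝ))⁻¹ * Hᵀ) :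
    specNorm Gt ≤ β + 2 / η := by
  set s : ℝ := frobNorm Δ ^ 2 + frobNorm H ^ 2 with hs
  have fΔ0 : 0 ≤ frobNorm Δ := Real.sqrt_nonneg _
  have fH0 : 0 ≤ frobNorm H := Real.sqrt_nonneg _
  have hl : 0 < lam := by rw [hlam]; exact mul_pos hη hpos
  have hMib0 : ‖(Hᵀ * H + lam • (1 : Matrix (Fin m) (Fin m) ℝ))⁻¹‖ ≤ lam⁻¹ :=
    StableAA.inv_opNorm_le H hl
  set Mi := (Hᵀ * H + lam • (1 : Matrix (Fin m) (Fin m) ℝ))⁻¹ with hMi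
  clear_value Mi
  have hMib : ‖Mi‖ ≤ lam⁻¹ := hMib0
  have hHt : ‖Hᵀ‖ ≤ frobNorm H :=
    (StableAA.opNorm_le_frobNorm Hᵀ).trans_eq (StableAA.frobNorm_transpose H)
  have hΔb : ‖Δ‖ ≤ frobNorm Δ := StableAA.opNorm_le_frobNorm Δ
  have hHb : ‖H‖ ≤ frobNorm H := StableAA.opNorm_le_frobNorm H
  have hsplit : (Δ + β • H) * Mi * Hᵀ = Δ * Mi * Hᵀ + β • (H * Mi * Hᵀ) := by
    rw [Matrix.add_mul, Matrix.add_mul, Matrix.smul_mul, Matrix.smul_mul]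
  -- bound for ‖Δ * Mi * Hᵀ‖
  have t1 : ‖Δ * Mi * Hᵀ‖ ≤ frobNorm Δ * lam⁻¹ * frobNorm H := by
    calc ‖Δ * Mi * Hᵀ‖ ≤ ‖Δ * Mi‖ * ‖Hᵀ‖ := Matrix.l2_opNorm_mul _ _
      _ ≤ (‖Δ‖ * ‖Mi‖) * ‖Hᵀ‖ :=
          mul_le_mul_of_nonneg_right (Matrix.l2_opNorm_mul _ _) (norm_nonneg _)
      _ ≤ (frobNorm Δ * lam⁻¹) * frobNorm H := by
          apply mul_le_mul
            (mul_le_mul hΔb hMib (norm_nonneg _) fΔ0) hHt (norm_nonneg _) (by positivity)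
  have t2 : ‖H * Mi * Hᵀ‖ ≤ frobNorm H * lam⁻¹ * frobNorm H := by
    calc ‖H * Mi * Hᵀ‖ ≤ ‖H * Mi‖ * ‖Hᵀ‖ := Matrix.l2_opNorm_mul _ _
      _ ≤ (‖H‖ * ‖Mi‖) * ‖Hᵀ‖ :=
          mul_le_mul_of_nonneg_right (Matrix.l2_opNorm_mul _ _) (norm_nonneg _)
      _ ≤ (frobNorm H * lam⁻¹) * frobNorm H := by
          apply mul_le_mul
            (mul_le_mul hHb hMib (norm_nonneg _) fH0) hHt (norm_nonneg _) (by positivity)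
  have t0 : ‖(-β) • (1 : Matrix (Fin n) (Fin n) ℝ)‖ ≤ β := by
    rw [norm_smul]
    calc ‖-β‖ * ‖(1 : Matrix (Fin n) (Fin n) ℝ)‖ ≤ ‖-β‖ * 1 :=
          mul_le_mul_of_nonneg_left StableAA.opNorm_one_le (norm_nonneg _)
      _ = β := by rw [mul_one, norm_neg, Real.norm_eq_abs, abs_of_nonneg hβ0]
  -- arithmetic bounds
  have e1 : frobNorm Δ * lam⁻¹ * frobNorm H ≤ 1 / (2 * η) := by
    have h2 : 2 * (frobNorm Δ * frobNorm H) ≤ s := by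
      rw [hs]; nlinarith [sq_nonneg (frobNorm Δ - frobNorm H)]
    have heq : frobNorm Δ * lam⁻¹ * frobNorm H = (frobNorm Δ * frobNorm H) / (η * s) := by
      rw [hlam]; ring
    rw [heq, div_le_div_iff₀ (by positivity) (by positivity)]
    nlinarith [mul_le_mul_of_nonneg_left h2 hη.le]
  have e2 : β * (frobNorm H * lam⁻¹ * frobNorm H) ≤ 1 / η := by
    have h2 : frobNorm H ^ 2 ≤ s := by rw [hs]; nlinarith [sq_nonneg (frobNorm Δ)]
    have heq : frobNorm H * lam⁻¹ * frobNorm H = (frobNorm H ^ 2) / (η * s) := by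
      rw [hlam]; ring
    have h3 : frobNorm H ^ 2 / (η * s) ≤ 1 / η := by
      rw [div_le_div_iff₀ (by positivity) hη]
      nlinarith [mul_le_mul_of_nonneg_left h2 hη.le]
    calc β * (frobNorm H * lam⁻¹ * frobNorm H) ≤ 1 * (1 / η) := by
          rw [heq]; exact mul_le_mul hβ1 h3 (by positivity) zero_le_one
      _ = 1 / η := one_mul _
  have hfin : 1 / (2 * η) + 1 / η ≤ 2 / η := by
    have ha : 1 / (2 * η) ≤ 1 / η := one_div_le_one_div_of_le hη (by linarith)
    have hb : 1 / η + 1 / η = 2 / η := by ring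
    linarith
  -- assemble
  rw [StableAA.specNorm_eq, hGt, hsplit, ← add_assoc]
  calc ‖(-β) • (1 : Matrix (Fin n) (Fin n) ℝ) + Δ * Mi * Hᵀ + β • (H * Mi * Hᵀ)‖
      ≤ ‖(-β) • (1 : Matrix (Fin n) (Fin n) ℝ) + Δ * Mi * Hᵀ‖ + ‖β • (H * Mi * Hᵀ)‖ :=
        norm_add_le _ _
    _ ≤ (‖(-β) • (1 : Matrix (Fin n) (Fin n) ℝ)‖ + ‖Δ * Mi * Hᵀ‖) + ‖β • (H * Mi * Hᵀ)‖ :=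
        add_le_add_left (norm_add_le _ _) _
    _ ≤ (β + 1 / (2 * η)) + 1 / η := by
        have hsm : ‖β • (H * Mi * Hᵀ)‖ = β * ‖H * Mi * Hᵀ‖ := by
          rw [norm_smul, Real.norm_eq_abs, abs_of_nonneg hβ0]
        have : ‖β • (H * Mi * Hᵀ)‖ ≤ 1 / η := by
          rw [hsm]
          exact le_trans (mul_le_mul_of_nonneg_left t2 hβ0) e2
        exact add_le_add (add_le_add t0 (t1.trans e1)) this
    _ ≤ β + 2 / η := by linarith
end

section
/- Let n ≥ 1, m ≥ 1, let H, Δ ∈ ℝ^{n×m}, e ∈ ℝ^n, and η > 0 with ‖Δ‖_F² + ‖H‖_F² > 0. Assume HᵀH is invertible. Set λ = η(‖Δ‖_F² + ‖H‖_F²), τ_non = (HᵀH)^{-1} Hᵀ e, τ_reg = (HᵀH + λ I)^{-1} Hᵀ e, and α_non = A·(1, τ_non)ᵀ, α_reg = A·(1, τ_reg)ᵀ ∈ ℝ^{m+1}, where A is the (m+1)×(m+1) matrix with entries A_{i,j} = 1 if j = m − i, A_{i,j} = −1 if j = m − i + 1, and 0 otherwise (indices 0,…,m). Then ‖α_reg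 − α_non‖₂² ≤ cond₂(A)²·‖α_non‖₂² − (2m+1)/(m+1), where cond₂(A) = ‖A‖₂·‖A^{-1}‖₂. -/
open Matrix

/-- The `(m+1) × (m+1)` transformation matrix `A` with `A i j = 1` if `j = m - i`,
`A i j = -1` if `j = m - i + 1`, and `0` otherwise. -/
def Amat (m : ℕ) : Matrix (Fin (m + 1)) (Fin (m + 1)) ℝ :=
  Matrix.of fun i j =>
    if (j : ℕ) = m - (i : ℕ) then 1
    else if (j : ℕ) = m - (i : ℕ) + 1 then -1 else 0

lemma sq_mulVec_le {n m : ℕ} (M : Matrix (Fin n) (Fin m) ℝ) (v : Fin m → ℝ) :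
    ∑ i, (M *ᵥ v) i ^ 2 ≤ specNorm M ^ 2 * ∑ i, v i ^ 2 := by
  have h := (LinearMap.toContinuousLinearMap (Matrix.toEuclideanLin M)).le_opNorm
      ((WithLp.equiv 2 (Fin m → ℝ)).symm v)
  have h1 : ‖(LinearMap.toContinuousLinearMap (Matrix.toEuclideanLin M))
      ((WithLp.equiv 2 (Fin m → ℝ)).symm v)‖ = Real.sqrt (∑ i, (M *ᵥ v) i ^ 2) := by
    change ‖(WithLp.toLp 2 (M *ᵥ v) : EuclideanSpace ℝ (Fin n))‖ = _
    rw [EuclideanSpace.norm_eq]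
    simp [Real.norm_eq_abs, sq_abs]
  have h2 : ‖((WithLp.equiv 2 (Fin m → ℝ)).symm v)‖ = Real.sqrt (∑ i, v i ^ 2) := by
    rw [EuclideanSpace.norm_eq]
    simp [Real.norm_eq_abs, sq_abs]
  rw [h1, h2] at h
  have hnn1 : (0:ℝ) ≤ ∑ i, (M *ᵥ v) i ^ 2 := Finset.sum_nonneg fun i _ => sq_nonneg _
  have hnn2 : (0:ℝ) ≤ ∑ i, v i ^ 2 := Finset.sum_nonneg fun i _ => sq_nonneg _
  have := mul_self_le_mul_self (Real.sqrt_nonneg _) h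
  rw [Real.mul_self_sqrt hnn1] at this
  calc ∑ i, (M *ᵥ v) i ^ 2 ≤
      (specNorm M * Real.sqrt (∑ i, v i ^ 2)) * (specNorm M * Real.sqrt (∑ i, v i ^ 2)) := this
    _ = specNorm M ^ 2 * ∑ i, v i ^ 2 := by
        rw [show (specNorm M * Real.sqrt (∑ i, v i ^ 2)) * (specNorm M * Real.sqrt (∑ i, v i ^ 2))
          = specNorm M ^2 * (Real.sqrt (∑ i, v i ^ 2) * Real.sqrt (∑ i, v i ^ 2)) by ring,
          Real.mul_self_sqrt hnn2]

lemma Amat_mulVec (m : ℕ) (x : Fin (m+1) → ℝ) (i : Fin (m+1)) :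
    (Amat m *ᵥ x) i = x ⟨m - (i:ℕ), by omega⟩ -
      (if h : 1 ≤ (i : ℕ) then x ⟨m - (i:ℕ) + 1, by omega⟩ else 0) := by
  have key : ∀ j : Fin (m+1),
      (Amat m) i j * x j =
        (if j = (⟨m - (i:ℕ), by omega⟩ : Fin (m+1)) then x j else 0)
        + (if h : 1 ≤ (i:ℕ) then
            (if j = (⟨m - (i:ℕ) + 1, by omega⟩ : Fin (m+1)) then -x j else 0) else 0) := by
    intro j
    simp only [Amat, Matrix.of_apply, Fin.ext_iff]
    have hj := j.isLt
    have hi := i.isLt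
    split_ifs <;> first | (exfalso; omega) | ring
  unfold mulVec dotProduct
  rw [Finset.sum_congr rfl fun j _ => key j, Finset.sum_add_distrib,
    Finset.sum_ite_eq' Finset.univ _ x]
  simp only [Finset.mem_univ, if_true]
  by_cases h : 1 ≤ (i:ℕ)
  · simp only [h, dif_pos, Finset.sum_ite_eq' Finset.univ _ (fun j => -x j),
      Finset.mem_univ, if_true]
    ring
  · simp [h]

def Bmat (m : ℕ) : Matrix (Fin (m + 1)) (Fin (m + 1)) ℝ :=
  Matrix.of fun i j => if (j : ℕ) ≤ m - (i : ℕ) then 1 else 0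

lemma Amat_mul_Bmat (m : ℕ) : Amat m * Bmat m = 1 := by
  ext i j
  have : (Amat m * Bmat m) i j = (Amat m *ᵥ (fun k => Bmat m k j)) i := by
    simp [Matrix.mul_apply, mulVec, dotProduct]
  rw [this, Amat_mulVec]
  simp only [Bmat, Matrix.of_apply, Matrix.one_apply, Fin.ext_iff]
  have hj := j.isLt
  have hi := i.isLt
  split_ifs <;> first | (exfalso; omega) | norm_num

lemma Amat_det_isUnit (m : ℕ) : IsUnit (Amat m).det := by
  apply IsUnit.of_mul_eq_one (Bmat m).det
  rw [← Matrix.det_mul, Amat_mul_Bmat, Matrix.det_one]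


/-- **Second inequality of Proposition 2.** With `τ_non = (HᵀH)⁻¹ Hᵀ e`,
`τ_reg = (HᵀH + λI)⁻¹ Hᵀ e`, `α_non = A (1, τ_non)ᵀ`, `α_reg = A (1, τ_reg)ᵀ`:
`‖α_reg - α_non‖₂² ≤ cond₂(A)² ‖α_non‖₂² - (2m+1)/(m+1)`,
where `cond₂(A) = ‖A‖₂ ‖A⁻¹‖₂`. -/
theorem stmt_5 (n m : ℕ) (hn : 1 ≤ n) (hm : 1 ≤ m)
    (H Δ : Matrix (Fin n) (Fin m) ℝ) (e : Fin n → ℝ)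
    (η : ℝ) (hη : 0 < η)
    (hpos : 0 < frobNorm Δ ^ 2 + frobNorm H ^ 2)
    (hinv : IsUnit (Hᵀ * H))
    (lam : ℝ) (hlam : lam = η * (frobNorm Δ ^ 2 + frobNorm H ^ 2))
    (τnon τreg : Fin m → ℝ)
    (hτnon : τnon = (Hᵀ * H)⁻¹ *ᵥ (Hᵀ *ᵥ e))
    (hτreg : τreg = (Hᵀ * H + lam • (1 : Matrix (Fin m) (Fin m) ℝ))⁻¹ *ᵥ (Hᵀ *ᵥ e))
    (αnon αreg : Fin (m + 1) → ℝ)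
    (hαnon : αnon = Amat m *ᵥ Fin.cons (1 : ℝ) τnon)
    (hαreg : αreg = Amat m *ᵥ Fin.cons (1 : ℝ) τreg) :
    ∑ i, (αreg i - αnon i) ^ 2 ≤
      (specNorm (Amat m) * specNorm (Amat m)⁻¹) ^ 2 * (∑ i, αnon i ^ 2)
        - (2 * (m : ℝ) + 1) / ((m : ℝ) + 1) := by
  have hlampos : 0 < lam := by rw [hlam]; positivity
  set B0 : Matrix (Fin m) (Fin m) ℝ := Hᵀ * H with hB0
  set S : Matrix (Fin m) (Fin m) ℝ := B0 + lam • (1 : Matrix (Fin m) (Fin m) ℝ) with hS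
  set c : Fin m → ℝ := Hᵀ *ᵥ e with hc
  -- PSD of B0
  have hPSD : ∀ x : Fin m → ℝ, 0 ≤ ∑ i, x i * (B0 *ᵥ x) i := by
    intro x
    have : ∑ i, x i * (B0 *ᵥ x) i = x ⬝ᵥ (B0 *ᵥ x) := rfl
    rw [this, hB0, ← Matrix.mulVec_mulVec, Matrix.dotProduct_mulVec, Matrix.vecMul_transpose]
    exact Finset.sum_nonneg fun i _ => mul_self_nonneg _
  have hdetB : IsUnit B0.det := (Matrix.isUnit_iff_isUnit_det _).mp hinv
  -- S invertible
  have hSmul : ∀ x : Fin m → ℝ, S *ᵥ x = B0 *ᵥ x + lam • x := by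
    intro x
    rw [hS, Matrix.add_mulVec, Matrix.smul_mulVec, Matrix.one_mulVec]
  have hdetS : IsUnit S.det := by
    rw [isUnit_iff_ne_zero]
    intro h0
    obtain ⟨v, hv, hSv⟩ := (Matrix.exists_mulVec_eq_zero_iff).mpr h0
    have hvv : 0 < ∑ i, v i * v i := by
      have : ∃ i, v i ≠ 0 := by
        by_contra hall
        push_neg at hall
        exact hv (funext hall)
      obtain ⟨i, hi⟩ := this
      exact Finset.sum_pos' (fun j _ => mul_self_nonneg _) ⟨i, Finset.mem_univ i, mul_self_pos.mpr hi⟩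
    have h1 : ∑ i, v i * (S *ᵥ v) i = 0 := by rw [hSv]; simp
    have h2 : ∑ i, (v i * (B0 *ᵥ v) i + lam * (v i * v i)) = 0 := by
      rw [← h1]
      refine Finset.sum_congr rfl fun i _ => ?_
      rw [hSmul v]
      simp only [Pi.add_apply, Pi.smul_apply, smul_eq_mul]
      ring
    rw [Finset.sum_add_distrib, ← Finset.mul_sum] at h2
    nlinarith [hPSD v]
  -- equations
  have hBτ : B0 *ᵥ τnon = c := by
    rw [hτnon, Matrix.mulVec_mulVec, Matrix.mul_nonsing_inv _ hdetB, Matrix.one_mulVec]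
  have hSτ : S *ᵥ τreg = c := by
    rw [hτreg, Matrix.mulVec_mulVec, Matrix.mul_nonsing_inv _ hdetS, Matrix.one_mulVec]
  set δ : Fin m → ℝ := fun i => τreg i - τnon i with hδ
  have hSδ : ∀ i, (S *ᵥ δ) i = -(lam * τnon i) := by
    intro i
    have : δ = τreg - τnon := rfl
    have h1 : S *ᵥ δ = S *ᵥ τreg - S *ᵥ τnon := by rw [this, Matrix.mulVec_sub]
    rw [h1, hSτ]
    have h2 : (S *ᵥ τnon) = B0 *ᵥ τnon + lam • τnon := hSmul τnon
    rw [h2, hBτ]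
    simp [Pi.sub_apply, Pi.add_apply]
  -- shrinkage: ∑ δ² ≤ ∑ τnon²
  have hshrink : ∑ i, δ i ^ 2 ≤ ∑ i, τnon i ^ 2 := by
    have key : ∑ i, ((S *ᵥ δ) i)^2
        = lam^2 * ∑ i, δ i ^2 + (∑ i, ((B0 *ᵥ δ) i)^2 + 2*lam* ∑ i, δ i * (B0 *ᵥ δ) i) := by
      rw [Finset.mul_sum, Finset.mul_sum, ← Finset.sum_add_distrib, ← Finset.sum_add_distrib]
      refine Finset.sum_congr rfl fun i _ => ?_
      rw [hSmul δ]
      simp only [Pi.add_apply, Pi.smul_apply, smul_eq_mul]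
      ring
    have key2 : ∑ i, ((S *ᵥ δ) i)^2 = lam^2 * ∑ i, τnon i ^2 := by
      rw [Finset.mul_sum]
      exact Finset.sum_congr rfl fun i _ => by rw [hSδ i]; ring
    have hq : 0 ≤ ∑ i, ((B0 *ᵥ δ) i)^2 := Finset.sum_nonneg fun i _ => sq_nonneg _
    have hcross := hPSD δ
    nlinarith [pow_pos hlampos 2]
  -- A invertibility facts
  have hAinv : (Amat m)⁻¹ * Amat m = 1 := Matrix.nonsing_inv_mul _ (Amat_det_isUnit m)
  -- difference vector
  have hdiff : ∀ i, αreg i - αnon i = (Amat m *ᵥ Fin.cons (0:ℝ) δ) i := by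
    intro i
    have hcons : (fun j => Fin.cons (1:ℝ) τreg j - Fin.cons (1:ℝ) τnon j) = Fin.cons (0:ℝ) δ := by
      funext j
      refine Fin.cases ?_ (fun j => ?_) j <;> simp [hδ]
    rw [hαreg, hαnon, ← hcons]
    simp only [mulVec, dotProduct]
    rw [← Finset.sum_sub_distrib]
    exact Finset.sum_congr rfl fun j _ => by ring
  -- step 1: LHS ≤ SA² * D
  set SA := specNorm (Amat m) with hSA
  set SI := specNorm (Amat m)⁻¹ with hSI
  have hstep1 : ∑ i, (αreg i - αnon i) ^ 2 ≤ SA^2 * ∑ i, δ i ^ 2 := by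
    calc ∑ i, (αreg i - αnon i) ^ 2 = ∑ i, ((Amat m *ᵥ Fin.cons (0:ℝ) δ) i)^2 :=
          Finset.sum_congr rfl fun i _ => by rw [hdiff i]
      _ ≤ SA^2 * ∑ i, (Fin.cons (0:ℝ) δ) i ^ 2 := sq_mulVec_le _ _
      _ = SA^2 * ∑ i, δ i ^ 2 := by
          congr 1
          rw [Fin.sum_univ_succ]
          simp
  -- step 3: 1 + T ≤ SI² * N
  have hrec : (Amat m)⁻¹ *ᵥ αnon = Fin.cons (1:ℝ) τnon := by
    rw [hαnon, Matrix.mulVec_mulVec, hAinv, Matrix.one_mulVec]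
  have hstep3 : 1 + ∑ i, τnon i ^ 2 ≤ SI^2 * ∑ i, αnon i ^ 2 := by
    have h := sq_mulVec_le ((Amat m)⁻¹) αnon
    rw [hrec] at h
    rw [Fin.sum_univ_succ] at h
    simpa using h
  -- step 4: (2m+1)/(m+1) ≤ SA²
  have hstep4 : (2 * (m:ℝ) + 1) / ((m:ℝ) + 1) ≤ SA^2 := by
    set v : Fin (m+1) → ℝ := fun j => (-1:ℝ)^(j:ℕ) with hv
    have hsq : ∀ k : ℕ, ((-1:ℝ)^k)^2 = 1 := fun k => by
      rw [← pow_mul, mul_comm, pow_mul]; norm_num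
    have hAv : ∀ i, ((Amat m *ᵥ v) i)^2 = if (i:ℕ) = 0 then 1 else 4 := by
      intro i
      rw [Amat_mulVec]
      by_cases h : 1 ≤ (i:ℕ)
      · rw [dif_pos h, if_neg (by omega)]
        simp only [hv]
        rw [pow_succ]
        linear_combination (4:ℝ) * hsq (m - (i:ℕ))
      · rw [dif_neg h, if_pos (by omega)]
        simp only [hv, sub_zero]
        exact hsq _
    have hsum : ∑ i, ((Amat m *ᵥ v) i)^2 = 4*(m:ℝ) + 1 := by
      rw [Finset.sum_congr rfl fun i _ => hAv i, Fin.sum_univ_succ]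
      simp
      ring
    have hvsum : ∑ i, v i ^ 2 = (m:ℝ) + 1 := by
      rw [Finset.sum_congr rfl fun (i : Fin (m+1)) _ => hsq (i:ℕ)]
      simp
    have h := sq_mulVec_le (Amat m) v
    rw [hsum, hvsum] at h
    rw [div_le_iff₀ (by positivity)]
    nlinarith
  have hSAnn : 0 ≤ SA := norm_nonneg _
  have hSInn : 0 ≤ SI := norm_nonneg _
  have hNnn : 0 ≤ ∑ i, αnon i ^ 2 := Finset.sum_nonneg fun i _ => sq_nonneg _
  nlinarith [mul_le_mul_of_nonneg_left hstep3 (sq_nonneg SA),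
    mul_le_mul_of_nonneg_left hshrink (sq_nonneg SA), hstep1, hstep4, sq_nonneg (SA*SI)]
end

section
/- Let n ≥ 1 and ω > 0. For all x, y ∈ ℝ^n, |mm_ω(x) − mm_ω(y)| ≤ max_{1 ≤ i ≤ n} |x_i − y_i|, i.e., the MellowMax operator is non-expansive with respect to the sup norm. -/
/-- The MellowMax operator `mm_ω(x) = (1/ω) log((1/n) ∑ᵢ exp(ω xᵢ))`. -/
noncomputable def mellowMax (n : ℕ) (ω : ℝ) (x : Fin n → ℝ) : ℝ :=
  (1 / ω) * Real.log ((1 / (n : ℝ)) * ∑ i, Real.exp (ω * x i))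

lemma mm_sum_pos (n : ℕ) (hn : 1 ≤ n) (ω : ℝ) (x : Fin n → ℝ) :
    0 < (1 / (n : ℝ)) * ∑ i, Real.exp (ω * x i) := by
  have hn0 : (0:ℝ) < n := by exact_mod_cast hn
  have : 0 < ∑ i : Fin n, Real.exp (ω * x i) :=
    Finset.sum_pos (fun i _ => Real.exp_pos _)
      (Finset.univ_nonempty_iff.mpr ⟨⟨0, hn⟩⟩)
  positivity

lemma mm_mono (n : ℕ) (hn : 1 ≤ n) (ω : ℝ) (hω : 0 < ω) (x y : Fin n → ℝ)
    (h : ∀ i, x i ≤ y i) : mellowMax n ω x ≤ mellowMax n ω y := by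
  unfold mellowMax
  have hn0 : (0:ℝ) < n := by exact_mod_cast hn
  apply mul_le_mul_of_nonneg_left _ (by positivity)
  apply Real.log_le_log (mm_sum_pos n hn ω x)
  apply mul_le_mul_of_nonneg_left _ (by positivity)
  exact Finset.sum_le_sum fun i _ =>
    Real.exp_le_exp.mpr (mul_le_mul_of_nonneg_left (h i) hω.le)

lemma mm_add_const (n : ℕ) (hn : 1 ≤ n) (ω : ℝ) (hω : 0 < ω) (x : Fin n → ℝ) (c : ℝ) :
    mellowMax n ω (fun i => x i + c) = mellowMax n ω x + c := by
  unfold mellowMax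
  have h1 : ∀ i, Real.exp (ω * (x i + c)) = Real.exp (ω * x i) * Real.exp (ω * c) := by
    intro i; rw [← Real.exp_add]; ring_nf
  simp only [h1, ← Finset.sum_mul]
  rw [show (1 / (n : ℝ)) * ((∑ i, Real.exp (ω * x i)) * Real.exp (ω * c)) =
      ((1 / (n : ℝ)) * ∑ i, Real.exp (ω * x i)) * Real.exp (ω * c) by ring]
  rw [Real.log_mul (ne_of_gt (mm_sum_pos n hn ω x)) (Real.exp_ne_zero _), Real.log_exp]
  field_simp

/-- The MellowMax operator is non-expansive with respect to the sup norm: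
`|mm_ω(x) - mm_ω(y)| ≤ max_{1 ≤ i ≤ n} |x_i - y_i|`. -/
theorem stmt_7 (n : ℕ) (hn : 1 ≤ n) (ω : ℝ) (hω : 0 < ω) (x y : Fin n → ℝ) :
    |mellowMax n ω x - mellowMax n ω y| ≤
      Finset.univ.sup' (Finset.univ_nonempty_iff.mpr ⟨⟨0, hn⟩⟩)
        (fun i => |x i - y i|) := by
  set M := Finset.univ.sup' (Finset.univ_nonempty_iff.mpr ⟨⟨0, hn⟩⟩)
        (fun i => |x i - y i|) with hM
  have hb : ∀ i, |x i - y i| ≤ M := fun i =>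
    Finset.le_sup' (fun i => |x i - y i|) (Finset.mem_univ i)
  rw [abs_sub_le_iff]
  constructor
  · have : mellowMax n ω x ≤ mellowMax n ω (fun i => y i + M) := by
      apply mm_mono n hn ω hω
      intro i
      have := (abs_le.mp (hb i)).2
      linarith
    rw [mm_add_const n hn ω hω] at this
    linarith
  · have : mellowMax n ω y ≤ mellowMax n ω (fun i => x i + M) := by
      apply mm_mono n hn ω hω
      intro i
      have := (abs_le.mp (hb i)).1
      linarith
    rw [mm_add_const n hn ω hω] at this
    linarith
end

section
/- Let n, m ≥ 1, H ∈ ℝ^{n×m}, e ∈ ℝ^n, and λ > 0, and assume HᵀH is invertible. Set τ_non = (HᵀH)^{-1} Hᵀ e and τ_reg = (HᵀH + λI)^{-1} Hᵀ e. Then ‖τ_reg − τ_non‖₂ ≤ ‖τ_non‖₂. -/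
open Matrix

/-- **Inequality (A11).** The ridge-regularized solution
`τ_reg = (HᵀH + λI)⁻¹ Hᵀ e` deviates from the unregularized least-squares
solution `τ_non = (HᵀH)⁻¹ Hᵀ e` by at most `‖τ_non‖₂`:
`‖τ_reg - τ_non‖₂ ≤ ‖τ_non‖₂`. -/
theorem stmt_16 (n m : ℕ) (hn : 1 ≤ n) (hm : 1 ≤ m)
    (H : Matrix (Fin n) (Fin m) ℝ) (e : Fin n → ℝ) (lam : ℝ) (hlam : 0 < lam)
    (hinv : IsUnit (Hᵀ * H))
    (τnon τreg : Fin m → ℝ)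
    (hτnon : τnon = (Hᵀ * H)⁻¹ *ᵥ (Hᵀ *ᵥ e))
    (hτreg : τreg = (Hᵀ * H + lam • (1 : Matrix (Fin m) (Fin m) ℝ))⁻¹ *ᵥ (Hᵀ *ᵥ e)) :
    Real.sqrt (∑ i, (τreg i - τnon i) ^ 2) ≤ Real.sqrt (∑ i, τnon i ^ 2) := by
  set A : Matrix (Fin m) (Fin m) ℝ := Hᵀ * H with hA
  set B : Matrix (Fin m) (Fin m) ℝ := A + lam • (1 : Matrix (Fin m) (Fin m) ℝ) with hB
  -- positivity of ⟨A v, v⟩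
  have hApos : ∀ v : Fin m → ℝ, 0 ≤ (A *ᵥ v) ⬝ᵥ v := by
    intro v
    have : (A *ᵥ v) ⬝ᵥ v = (H *ᵥ v) ⬝ᵥ (H *ᵥ v) := by
      rw [hA, ← Matrix.mulVec_mulVec, Matrix.mulVec_transpose,
        dotProduct_comm, Matrix.dotProduct_mulVec, dotProduct_comm]
    rw [this]
    exact Finset.sum_nonneg fun i _ => mul_self_nonneg _
  -- key: λ² ‖v‖² ≤ ‖B v‖²
  have hkey : ∀ v : Fin m → ℝ, lam ^ 2 * (v ⬝ᵥ v) ≤ (B *ᵥ v) ⬝ᵥ (B *ᵥ v) := by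
    intro v
    have hBv : B *ᵥ v = A *ᵥ v + lam • v := by
      rw [hB, Matrix.add_mulVec, Matrix.smul_mulVec, Matrix.one_mulVec]
    rw [hBv]
    have expand : (A *ᵥ v + lam • v) ⬝ᵥ (A *ᵥ v + lam • v)
        = (A *ᵥ v) ⬝ᵥ (A *ᵥ v) + 2 * lam * ((A *ᵥ v) ⬝ᵥ v) + lam ^ 2 * (v ⬝ᵥ v) := by
      simp only [dotProduct, Pi.add_apply, Pi.smul_apply, smul_eq_mul,
        Finset.mul_sum, ← Finset.sum_add_distrib]
      apply Finset.sum_congr rfl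
      intro i _
      ring
    rw [expand]
    have h1 : 0 ≤ (A *ᵥ v) ⬝ᵥ (A *ᵥ v) :=
      Finset.sum_nonneg fun i _ => mul_self_nonneg _
    have h2 : 0 ≤ 2 * lam * ((A *ᵥ v) ⬝ᵥ v) :=
      mul_nonneg (by positivity) (hApos v)
    linarith
  -- B is invertible
  have hBunit : IsUnit B := by
    rw [← Matrix.mulVec_injective_iff_isUnit]
    intro v w hvw
    have hzero : B *ᵥ (v - w) = 0 := by
      rw [Matrix.mulVec_sub, hvw, sub_self]
    have h0 : lam ^ 2 * ((v - w) ⬝ᵥ (v - w)) ≤ 0 := by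
      have := hkey (v - w)
      rw [hzero] at this
      simpa using this
    have hnn : 0 ≤ (v - w) ⬝ᵥ (v - w) :=
      Finset.sum_nonneg fun i _ => mul_self_nonneg _
    have hq : (v - w) ⬝ᵥ (v - w) = 0 := by nlinarith [pow_pos hlam 2]
    have : v - w = 0 := by
      funext i
      have := (Finset.sum_eq_zero_iff_of_nonneg
        (fun i _ => mul_self_nonneg ((v - w) i))).1 hq i (Finset.mem_univ i)
      have := mul_self_eq_zero.1 this
      simpa using this
    exact sub_eq_zero.1 this
  have hAe : A *ᵥ τnon = Hᵀ *ᵥ e := by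
    rw [hτnon, Matrix.mulVec_mulVec, Matrix.mul_nonsing_inv _
      ((Matrix.isUnit_iff_isUnit_det _).1 hinv), Matrix.one_mulVec]
  have hBe : B *ᵥ τreg = Hᵀ *ᵥ e := by
    rw [hτreg, Matrix.mulVec_mulVec, Matrix.mul_nonsing_inv _
      ((Matrix.isUnit_iff_isUnit_det _).1 hBunit), Matrix.one_mulVec]
  set d : Fin m → ℝ := τreg - τnon with hd
  have hBd : B *ᵥ d = (-lam) • τnon := by
    have hBτnon : B *ᵥ τnon = Hᵀ *ᵥ e + lam • τnon := by
      rw [hB, Matrix.add_mulVec, Matrix.smul_mulVec, Matrix.one_mulVec, hAe]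
    rw [hd, Matrix.mulVec_sub, hBe, hBτnon]
    funext i
    simp
  have hmain : d ⬝ᵥ d ≤ τnon ⬝ᵥ τnon := by
    have h1 := hkey d
    rw [hBd] at h1
    have h2 : ((-lam) • τnon) ⬝ᵥ ((-lam) • τnon) = lam ^ 2 * (τnon ⬝ᵥ τnon) := by
      simp [dotProduct, Finset.mul_sum]
      apply Finset.sum_congr rfl
      intro i _
      ring
    rw [h2] at h1
    have hl2 : 0 < lam ^ 2 := by positivity
    exact le_of_mul_le_mul_left h1 hl2
  apply Real.sqrt_le_sqrt
  have e1 : ∑ i, (τreg i - τnon i) ^ 2 = d ⬝ᵥ d := by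
    apply Finset.sum_congr rfl
    intro i _
    simp [hd, sq]
  have e2 : ∑ i, τnon i ^ 2 = τnon ⬝ᵥ τnon := by
    apply Finset.sum_congr rfl
    intro i _
    simp [sq]
  rw [e1, e2]
  exact hmain
end

section
/- Let n ≥ 1, m ≥ 1, k ≥ m+1, let T : ℝ^n → ℝ^n be any map, let α ∈ ℝ^{m+1} with Σ_{i=0}^m α_i = 1, let β ∈ ℝ, and let Q^{(k−1−m)}, …, Q^{(k)} ∈ ℝ^n satisfy Q^{(k)} = (1−β)·Σ_{i=0}^m α_i Q^{(k−1−m+i)} + β·Σ_{i=0}^m α_i T Q^{(k−1−m+i)}. Set τ_i = Σ_{l=0}^{m−i} α_l for i = 0, …, m, e^α = Σ_{i=0}^m α_i (T Q^{(k−1−m+i)} − Q^{(k−1−m+i)}), and e_k = T Q^{(k)} − Q^{(k)}. Then e_k = (1−β)·e^α + Σ_{i=0}^m τ_i·(T Q^{(k−i)} − T Q^{(k−i−1)}). -/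
/-- Abel-summation / telescoping lemma: partial-sum-weighted differences. -/
lemma abel_aux (nn : ℕ) (α : ℕ → ℝ) (g : ℕ → Fin nn → ℝ) : ∀ M : ℕ,
    ∑ j ∈ Finset.range (M + 1), (∑ l ∈ Finset.range (j + 1), α l) • (g (j + 1) - g j)
      = (∑ l ∈ Finset.range (M + 1), α l) • g (M + 1)
        - ∑ j ∈ Finset.range (M + 1), α j • g j := by
  intro M
  induction M with
  | zero => simp [smul_sub]
  | succ M ih =>
      rw [Finset.sum_range_succ
        (fun j => (∑ l ∈ Finset.range (j + 1), α l) • (g (j + 1) - g j)) (M + 1), ih,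
        Finset.sum_range_succ α (M + 1),
        Finset.sum_range_succ (fun j => α j • g j) (M + 1)]
      module

/-- Central identity in the proof of Theorem 1: the new fixed-point residual
`e_k = T Q^{(k)} - Q^{(k)}` of the damped Anderson iteration decomposes as
`e_k = (1-β) e^α + ∑_{i=0}^m τ_i (T Q^{(k-i)} - T Q^{(k-i-1)})`. -/
theorem stmt_18 (n m k : ℕ) (hn : 1 ≤ n) (hm : 1 ≤ m) (hk : m + 1 ≤ k)
    (T : (Fin n → ℝ) → (Fin n → ℝ)) (Q : ℕ → Fin n → ℝ)
    (α : ℕ → ℝ) (hα : ∑ i ∈ Finset.range (m + 1), α i = 1) (β : ℝ)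
    (hQ : Q k = (1 - β) • ∑ i ∈ Finset.range (m + 1), α i • Q (k - 1 - m + i)
        + β • ∑ i ∈ Finset.range (m + 1), α i • T (Q (k - 1 - m + i)))
    (τ : ℕ → ℝ) (hτ : ∀ i ≤ m, τ i = ∑ l ∈ Finset.range (m - i + 1), α l)
    (eα : Fin n → ℝ)
    (heα : eα = ∑ i ∈ Finset.range (m + 1),
      α i • (T (Q (k - 1 - m + i)) - Q (k - 1 - m + i)))
    (ek : Fin n → ℝ) (hek : ek = T (Q k) - Q k) :
    ek = (1 - β) • eα
      + ∑ i ∈ Finset.range (m + 1), τ i • (T (Q (k - i)) - T (Q (k - i - 1))) := by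
  obtain ⟨c, rfl⟩ : ∃ c, k = c + m + 1 := ⟨k - (m + 1), by omega⟩
  have hc : c + m + 1 - 1 - m = c := by omega
  rw [hc] at hQ heα
  -- rewrite the telescoping sum via reflection and the Abel lemma
  have htel : ∑ i ∈ Finset.range (m + 1),
        τ i • (T (Q (c + m + 1 - i)) - T (Q (c + m + 1 - i - 1)))
      = T (Q (c + m + 1)) - ∑ i ∈ Finset.range (m + 1), α i • T (Q (c + i)) := by
    rw [← Finset.sum_range_reflect]
    have hcong : ∀ j ∈ Finset.range (m + 1),
        τ (m + 1 - 1 - j) • (T (Q (c + m + 1 - (m + 1 - 1 - j)))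
            - T (Q (c + m + 1 - (m + 1 - 1 - j) - 1)))
          = (∑ l ∈ Finset.range (j + 1), α l) • (T (Q (c + (j + 1))) - T (Q (c + j))) := by
      intro j hj
      have hjm : j ≤ m := by
        have := Finset.mem_range.mp hj; omega
      have h0 : m + 1 - 1 - j = m - j := by omega
      have h1 : c + m + 1 - (m - j) = c + (j + 1) := by omega
      have h2 : c + m + 1 - (m - j) - 1 = c + j := by omega
      have h3 : τ (m - j) = ∑ l ∈ Finset.range (j + 1), α l := by
        rw [hτ (m - j) (by omega)]
        congr 2
        omega
      rw [h0, h2, h1, h3]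
    rw [Finset.sum_congr rfl hcong, abel_aux n α (fun j => T (Q (c + j))) m, hα, one_smul, ← add_assoc]
  rw [htel, hek, heα, hQ]
  have hsplit : ∑ i ∈ Finset.range (m + 1), α i • (T (Q (c + i)) - Q (c + i))
      = ∑ i ∈ Finset.range (m + 1), α i • T (Q (c + i))
        - ∑ i ∈ Finset.range (m + 1), α i • Q (c + i) := by
    rw [← Finset.sum_sub_distrib]
    exact Finset.sum_congr rfl fun i _ => smul_sub _ _ _
  rw [hsplit]
  set A := ∑ i ∈ Finset.range (m + 1), α i • Q (c + i)
  set B := ∑ i ∈ Finset.range (m + 1), α i • T (Q (c + i))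
  module
end
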